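/- arXiv:1602.07154 — 4 statements merged into one kernel-verified Lean document; each statement's English description precedes it below -/
import Mathlib

section
/- In the graph H_z with even z ≥ 2, running the greedy ranking algorithm where u_1, ..., u_z arrive in order and each u_i is matched to its lowest-indexed unmatched neighbor v_j produces a matching of size exactly z/2. -/
/-- Neighbourhood of `u_i` in the graph `H_z`. -/
def HzNbrs (z i : ℕ) : Finset ℕ :=
  if i ≤ z / 2 then
    (Finset.Icc 1 z).filter (fun j => j = 2 * i - 1 ∨ j = 2 * i ∨ j = 2 * i + 1)
  else {2 * i - z - 1}

/-- Set of `V`-vertices matched after greedily processing `u_1, …, u_i` in order,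
matching each `u_i` to its *lowest-indexed* unmatched neighbour. -/
def greedyMinMatched (z : ℕ) : ℕ → Finset ℕ
  | 0 => ∅
  | i + 1 =>
      let M := greedyMinMatched z i
      let av := HzNbrs z (i + 1) \ M
      if h : av.Nonempty then insert (av.min' h) M else M

theorem greedyMinMatched_eq (z : ℕ) (hz : 2 ≤ z) (hze : Even z) :
    ∀ i, i ≤ z →
      greedyMinMatched z i = (Finset.range (min i (z / 2))).image (fun k => 2 * k + 1) := by
  obtain ⟨m, hm⟩ := hze
  intro i
  induction i with
  | zero => intro _; simp [greedyMinMatched]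
  | succ i ih =>
    intro hiz
    have hM := ih (by omega)
    rw [greedyMinMatched]
    by_cases hle : i + 1 ≤ z / 2
    · have hn : HzNbrs z (i+1) = (Finset.Icc 1 z).filter
          (fun j => j = 2*(i+1)-1 ∨ j = 2*(i+1) ∨ j = 2*(i+1)+1) := by
        rw [HzNbrs, if_pos hle]
      have hmem : (2*i+1) ∈ HzNbrs z (i+1) \ greedyMinMatched z i := by
        rw [hn, hM]
        simp only [Finset.mem_sdiff, Finset.mem_filter, Finset.mem_Icc, Finset.mem_image,
          Finset.mem_range]
        refine ⟨⟨⟨by omega, by omega⟩, by left; omega⟩, ?_⟩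
        rintro ⟨k, hk, hk2⟩; omega
      have hne : (HzNbrs z (i+1) \ greedyMinMatched z i).Nonempty := ⟨_, hmem⟩
      have hmin : (HzNbrs z (i+1) \ greedyMinMatched z i).min' hne = 2*i+1 := by
        apply le_antisymm
        · exact Finset.min'_le _ _ hmem
        · apply Finset.le_min'
          intro y hy
          rw [hn] at hy
          simp only [Finset.mem_sdiff, Finset.mem_filter, Finset.mem_Icc] at hy
          omega
      have h1 : min (i+1) (z/2) = i + 1 := by omega
      have h2 : min i (z/2) = i := by omega
      rw [dif_pos hne, hmin, hM, h1, h2, Finset.range_add_one, Finset.image_insert]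
    · have hn : HzNbrs z (i+1) = {2*(i+1) - z - 1} := by
        rw [HzNbrs, if_neg hle]
      have hin : (2*(i+1) - z - 1) ∈ greedyMinMatched z i := by
        rw [hM]
        simp only [Finset.mem_image, Finset.mem_range]
        exact ⟨i - z/2, by omega, by omega⟩
      have hempty : ¬ (HzNbrs z (i+1) \ greedyMinMatched z i).Nonempty := by
        rw [hn, Finset.not_nonempty_iff_eq_empty, Finset.sdiff_eq_empty_iff_subset,
          Finset.singleton_subset_iff]
        exact hin
      have h1 : min (i+1) (z/2) = min i (z/2) := by omega
      rw [dif_neg hempty, hM, h1]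

/-- Greedy ranking with increasing ranks on `H_z` (even `z ≥ 2`) produces a matching
of size exactly `z/2`. -/
theorem Hz_greedy_min_card (z : ℕ) (hz : 2 ≤ z) (hze : Even z) :
    (greedyMinMatched z z).card = z / 2 := by
  rw [greedyMinMatched_eq z hz hze z le_rfl]
  rw [Finset.card_image_of_injective _ (fun a b h => by omega), Finset.card_range]
  omega
end

section
/- Let ε > 0 and let σ_1, ..., σ_k be permutations of [n] with k ≤ log₂ log₂ n − log₂ log₂ (1/ε) − 2. Then there exists a partition of [n] into sets C, B_1, B_2, ... such that |B_i| ≥ 1/ε for every i, |C| ≤ √n, and for every set B_i = {b_1 < b_2 < ... < b_p} and every permutation σ_j, the sequence σ_j(b_1), σ_j(b_2), ..., σ_j(b_p) is monotonic. -/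
open Function Finset


variable {α : Type*} [LinearOrder α] {β : Type*}

open Function Finset

namespace Theorems100

/-- **Erdős–Szekeres Theorem**: Given a sequence of more than `r * s` distinct values, there is an
increasing sequence of length longer than `r` or a decreasing sequence of length longer than `s`.

Proof idea:
We label each value in the sequence with two numbers specifying the longest increasing
subsequence ending there, and the longest decreasing subsequence ending there.
We then show the pair of labels must be unique. Now if there is no increasing sequence longer than
`r` and no decreasing sequence longer than `s`, then there are at most `r * s` possible labels,
which is a contradiction if there are more than `r * s` elements.
-/
theorem erdos_szekeres {r s n : ℕ} {f : Fin n → α} (hn : r * s < n) (hf : Injective f) :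
    (∃ t : Finset (Fin n), r < #t ∧ StrictMonoOn f ↑t) ∨
      ∃ t : Finset (Fin n), s < #t ∧ StrictAntiOn f ↑t := by
  -- Given an index `i`, produce the set of increasing (resp., decreasing) subsequences which ends
  -- at `i`.
  let inc_sequences_ending_in : Fin n → Finset (Finset (Fin n)) := fun i =>
    univ.powerset.filter fun t => Finset.max t = i ∧ StrictMonoOn f ↑t
  let dec_sequences_ending_in : Fin n → Finset (Finset (Fin n)) := fun i =>
    univ.powerset.filter fun t => Finset.max t = i ∧ StrictAntiOn f ↑t
  -- The singleton sequence is in both of the above collections.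
  -- (This is useful to show that the maximum length subsequence is at least 1, and that the set
  -- of subsequences is nonempty.)
  have inc_i : ∀ i, {i} ∈ inc_sequences_ending_in i := fun i => by
    simp [inc_sequences_ending_in, StrictMonoOn]
  have dec_i : ∀ i, {i} ∈ dec_sequences_ending_in i := fun i => by
    simp [dec_sequences_ending_in, StrictAntiOn]
  -- Define the pair of labels: at index `i`, the pair is the maximum length of an increasing
  -- subsequence ending at `i`, paired with the maximum length of a decreasing subsequence ending
  -- at `i`.
  -- We call these labels `(a_i, b_i)`.
  let ab' : Fin n → ℕ × ℕ := by
    intro i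
    apply
      (max' ((inc_sequences_ending_in i).image card) (Nonempty.image ⟨{i}, inc_i i⟩ _),
        max' ((dec_sequences_ending_in i).image card) (Nonempty.image ⟨{i}, dec_i i⟩ _))
  -- Porting note: it costs many resources to unfold `ab'` so we obscure the definition:
  generalize hab : ab' = ab
  -- It now suffices to show that one of the labels is 'big' somewhere. In particular, if the
  -- first in the pair is more than `r` somewhere, then we have an increasing subsequence in our
  -- set, and if the second is more than `s` somewhere, then we have a decreasing subsequence.
  rsuffices ⟨i, hi⟩ : ∃ i, r < (ab i).1 ∨ s < (ab i).2
  · refine Or.imp ?_ ?_ hi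
    on_goal 1 =>
      have : (ab i).1 ∈ image card (inc_sequences_ending_in i) := by
        simp only [← hab]; exact max'_mem _ (Nonempty.image ⟨{i}, inc_i i⟩ _)
    on_goal 2 =>
      have : (ab i).2 ∈ image card (dec_sequences_ending_in i) := by
        simp only [← hab]; exact max'_mem _ (Nonempty.image ⟨{i}, dec_i i⟩ _)
    all_goals
      intro hi
      rw [mem_image] at this
      obtain ⟨t, ht₁, ht₂⟩ := this
      refine ⟨t, by rwa [ht₂], ?_⟩
      rw [mem_filter] at ht₁
      apply ht₁.2.2
  -- Show first that the pair of labels is unique.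
  have : Injective ab := by
    simp only [← hab]
    apply Function.Injective.of_lt_imp_ne
    intro i j k q
    injection q with q₁ q₂
    -- We have two cases: `f i < f j` or `f j < f i`.
    -- In the former we'll show `a_i < a_j`, and in the latter we'll show `b_i < b_j`.
    cases lt_or_gt_of_ne fun _ => ne_of_lt ‹i < j› (hf ‹f i = f j›)
    on_goal 1 =>
      apply ne_of_lt _ q₁
      have : (ab' i).1 ∈ image card (inc_sequences_ending_in i) := by exact max'_mem _ (Nonempty.image ⟨{i}, inc_i i⟩ _)
    on_goal 2 =>
      apply ne_of_lt _ q₂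
      have : (ab' i).2 ∈ image card (dec_sequences_ending_in i) := by exact max'_mem _ (Nonempty.image ⟨{i}, dec_i i⟩ _)
    all_goals
      -- Reduce to showing there is a subsequence of length `a_i + 1` which ends at `j`.
      rw [Nat.lt_iff_add_one_le]
      apply le_max'
      rw [mem_image] at this ⊢
      -- In particular we take the subsequence `t` of length `a_i` which ends at `i`, by definition
      -- of `a_i`
      rcases this with ⟨t, ht₁, ht₂⟩
      rw [mem_filter] at ht₁
      -- Ensure `t` ends at `i`.
      have : t.max = i := by simp only [ht₁.2.1]
      -- Now our new subsequence is given by adding `j` at the end of `t`.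
      refine ⟨insert j t, ?_, ?_⟩
      -- First make sure it's valid, i.e., that this subsequence ends at `j` and is increasing
      · rw [mem_filter]
        refine ⟨?_, ?_, ?_⟩
        · rw [mem_powerset]; apply subset_univ
        -- It ends at `j` since `i < j`.
        · convert max_insert (a := j) (s := t)
          rw [ht₁.2.1, max_eq_left]
          apply WithBot.coe_le_coe.mpr (le_of_lt ‹i < j›)
        -- To show it's increasing (i.e., `f` is monotone increasing on `t.insert j`), we do cases
        -- on what the possibilities could be - either in `t` or equals `j`.
        simp only [StrictMonoOn, StrictAntiOn, coe_insert, Set.mem_insert_iff, mem_coe]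
        -- Most of the cases are just bashes.
        rintro x ⟨rfl | _⟩ y ⟨rfl | _⟩ _
        · apply (irrefl _ ‹j < j›).elim
        · exfalso
          apply not_le_of_gt (_root_.trans ‹i < j› ‹j < y›) (le_max_of_eq ‹y ∈ t› ‹t.max = i›)
        · first
          | apply lt_of_le_of_lt _ ‹f i < f j›
          | apply lt_of_lt_of_le ‹f j < f i› _
          rcases lt_or_eq_of_le (le_max_of_eq ‹x ∈ t› ‹t.max = i›) with (_ | rfl)
          · apply le_of_lt (ht₁.2.2 ‹x ∈ t› (mem_of_max ‹t.max = i›) ‹x < i›)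
          · rfl
        · apply ht₁.2.2 ‹x ∈ t› ‹y ∈ t› ‹x < y›
      -- Finally show that this new subsequence is one longer than the old one.
      · rw [card_insert_of_notMem, ht₂]
        intro
        apply not_le_of_gt ‹i < j› (le_max_of_eq ‹j ∈ t› ‹t.max = i›)
  -- Finished both goals!
  -- Now that we have uniqueness of each label, it remains to do some counting to finish off.
  -- Suppose all the labels are small.
  by_contra! q
  -- Then the labels `(a_i, b_i)` all fit in the following set: `{ (x,y) | 1 ≤ x ≤ r, 1 ≤ y ≤ s }`
  let ran : Finset (ℕ × ℕ) := (range r).image Nat.succ ×ˢ (range s).image Nat.succ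
  -- which we prove here.
  have : image ab univ ⊆ ran := by
    -- First some logical shuffling
    rintro ⟨x₁, x₂⟩
    simp only [ran, mem_image, exists_prop, mem_range, mem_univ, mem_product, true_and,
      Prod.ext_iff]
    rintro ⟨i, rfl, rfl⟩
    specialize q i
    -- Show `1 ≤ a_i` and `1 ≤ b_i`, which is easy from the fact that `{i}` is an increasing and
    -- decreasing subsequence which we did right near the top.
    have z : 1 ≤ (ab i).1 ∧ 1 ≤ (ab i).2 := by
      simp only [← hab]
      constructor <;>
        · apply le_max'
          rw [mem_image]
          exact ⟨{i}, by solve_by_elim, card_singleton i⟩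
    -- Need to get `a_i ≤ r`, here phrased as: there is some `a < r` with `a+1 = a_i`.
    exact ⟨⟨(ab i).1 - 1, by omega⟩, (ab i).2 - 1, by omega⟩
  -- To get our contradiction, it suffices to prove `n ≤ r * s`
  apply not_le_of_gt hn
  -- Which follows from considering the cardinalities of the subset above, since `ab` is injective.
  simpa [ran, Nat.succ_injective, card_image_of_injective, ‹Injective ab›] using card_le_card this

end Theorems100


namespace MonoPartAux

theorem es_finset {n : ℕ} (S : Finset (Fin n)) (f : Fin n → Fin n)
    (hf : Set.InjOn f ↑S) :
    ∃ T ⊆ S, Real.sqrt S.card ≤ T.card ∧ (StrictMonoOn f ↑T ∨ StrictAntiOn f ↑T) := by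
  rcases Nat.eq_zero_or_pos S.card with h0 | hpos
  · exact ⟨∅, Finset.empty_subset _, by simp [h0], Or.inl (by simp [StrictMonoOn])⟩
  set r : ℕ := Nat.sqrt (S.card - 1) with hr
  have hrr : r * r < S.card := by
    have h5 := Nat.sqrt_le' (S.card - 1)
    rw [← hr] at h5
    try rw [pow_two] at h5
    omega
  set e := S.orderIsoOfFin (rfl : S.card = S.card) with he
  set g : Fin S.card → Fin n := fun i => f ((e i : Fin n)) with hg
  have hginj : Function.Injective g := by
    intro i j hij
    have hmem : ∀ i : Fin S.card, ((e i : Fin n)) ∈ S := fun i => (e i).2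
    have := hf (hmem i) (hmem j) hij
    exact e.injective (Subtype.ext this)
  rcases Theorems100.erdos_szekeres hrr hginj with ⟨t, htc, htm⟩ | ⟨t, htc, htm⟩
  all_goals {
    refine ⟨t.image (fun i => ((e i : Fin n))), ?_, ?_, ?_⟩
    · intro x hx
      simp only [Finset.mem_image] at hx
      obtain ⟨i, _, rfl⟩ := hx
      exact (e i).2
    · have hinj : Function.Injective (fun i : Fin S.card => ((e i : Fin n))) :=
        fun i j hij => e.injective (Subtype.ext hij)
      rw [Finset.card_image_of_injective _ hinj]
      have h2 : S.card ≤ (r + 1) * (r + 1) := by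
        have h4 := Nat.lt_succ_sqrt' (S.card - 1)
        rw [← hr] at h4
        try rw [Nat.succ_eq_add_one, pow_two] at h4
        omega
      have h3 : Real.sqrt S.card ≤ ((r : ℝ) + 1) := by
        rw [show ((r:ℝ)+1) = Real.sqrt (((r+1)*(r+1) : ℕ) : ℝ) by
          push_cast
          rw [Real.sqrt_mul_self (by positivity)]]
        exact Real.sqrt_le_sqrt (by exact_mod_cast h2)
      refine h3.trans ?_
      exact_mod_cast Nat.succ_le_of_lt htc
    · first
      | · left
          intro x hx y hy hxy
          simp only [Finset.coe_image, Set.mem_image, Finset.mem_coe] at hx hy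
          obtain ⟨i, hi, rfl⟩ := hx
          obtain ⟨j, hj, rfl⟩ := hy
          exact htm hi hj (by exact_mod_cast (OrderIso.lt_iff_lt e).mp (Subtype.coe_lt_coe.mp hxy))
      | · right
          intro x hx y hy hxy
          simp only [Finset.coe_image, Set.mem_image, Finset.mem_coe] at hx hy
          obtain ⟨i, hi, rfl⟩ := hx
          obtain ⟨j, hj, rfl⟩ := hy
          exact htm hi hj (by exact_mod_cast (OrderIso.lt_iff_lt e).mp (Subtype.coe_lt_coe.mp hxy)) }

theorem iterated {n : ℕ} : ∀ (k : ℕ) (g : Fin k → Equiv.Perm (Fin n)) (S : Finset (Fin n)),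
    ∃ T ⊆ S, (S.card : ℝ) ^ ((1/2 : ℝ) ^ k) ≤ T.card ∧
      ∀ j, StrictMonoOn (g j) ↑T ∨ StrictAntiOn (g j) ↑T := by
  intro k
  induction k with
  | zero =>
    intro g S
    exact ⟨S, Finset.Subset.refl _, by simp, fun j => j.elim0⟩
  | succ k ih =>
    intro g S
    obtain ⟨T1, hT1S, hc1, hm1⟩ := es_finset S (g 0) ((g 0).injective.injOn)
    obtain ⟨T, hTT1, hc, hm⟩ := ih (fun i => g i.succ) T1
    refine ⟨T, hTT1.trans hT1S, ?_, ?_⟩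
    · have h1 : (S.card : ℝ) ^ ((1/2 : ℝ) ^ (k+1)) =
          (Real.sqrt S.card) ^ ((1/2 : ℝ) ^ k) := by
        rw [Real.sqrt_eq_rpow, pow_succ', Real.rpow_mul (Nat.cast_nonneg _)]
      calc (S.card : ℝ) ^ ((1/2 : ℝ) ^ (k+1))
          = (Real.sqrt S.card) ^ ((1/2 : ℝ) ^ k) := h1
        _ ≤ (T1.card : ℝ) ^ ((1/2 : ℝ) ^ k) :=
            Real.rpow_le_rpow (Real.sqrt_nonneg _) hc1 (by positivity)
        _ ≤ T.card := hc
    · intro j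
      refine Fin.cases ?_ ?_ j
      · exact hm1.imp (fun h => h.mono (Finset.coe_subset.mpr hTT1))
          (fun h => h.mono (Finset.coe_subset.mpr hTT1))
      · intro i
        exact hm i

theorem key_ineq {n k : ℕ} {ε : ℝ} (hε : 0 < ε) (hn : 2 ≤ n)
    (hk : (k : ℝ) ≤ Real.logb 2 (Real.logb 2 n) - Real.logb 2 (Real.logb 2 (1 / ε)) - 2) :
    (1 : ℝ) / ε ≤ (n : ℝ) ^ ((1/2 : ℝ) ^ (k + 1)) := by
  have hnR : (2 : ℝ) ≤ (n : ℝ) := by exact_mod_cast hn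
  have hn1 : (1 : ℝ) ≤ (n : ℝ) := by linarith
  have hexp : (0 : ℝ) < (1/2 : ℝ) ^ (k + 1) := by positivity
  by_cases hε1 : (1 : ℝ) / ε ≤ 1
  · refine hε1.trans ?_
    calc (1:ℝ) = (1:ℝ) ^ ((1/2 : ℝ) ^ (k + 1)) := (Real.one_rpow _).symm
      _ ≤ (n : ℝ) ^ ((1/2 : ℝ) ^ (k + 1)) :=
        Real.rpow_le_rpow zero_le_one hn1 hexp.le
  · push_neg at hε1
    set ℓ := Real.logb 2 (1 / ε) with hℓdef
    set L := Real.logb 2 (n : ℝ) with hLdef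
    have hℓpos : 0 < ℓ := Real.logb_pos one_lt_two hε1
    have hLpos : 0 < L := Real.logb_pos one_lt_two (by linarith)
    have hlog : (k : ℝ) + 2 + Real.logb 2 ℓ ≤ Real.logb 2 L := by linarith [hk]
    have hL : (2 : ℝ) ^ ((k : ℝ) + 2) * ℓ ≤ L := by
      have h1 : (2 : ℝ) ^ (((k : ℝ) + 2) + Real.logb 2 ℓ) ≤ (2 : ℝ) ^ (Real.logb 2 L) :=
        Real.rpow_le_rpow_of_exponent_le one_le_two hlog
      rwa [Real.rpow_add (by norm_num), Real.rpow_logb (by norm_num) (by norm_num) hℓpos,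
        Real.rpow_logb (by norm_num) (by norm_num) hLpos] at h1
    have h2exp : (2 : ℝ) ^ ((k : ℝ) + 2) = (2 : ℝ) ^ (k + 2 : ℕ) := by
      rw [← Real.rpow_natCast 2 (k + 2)]
      norm_num
    have hgoal : ℓ ≤ L * (1/2 : ℝ) ^ (k + 1) := by
      have hpow : ((2 : ℝ) ^ (k + 2 : ℕ)) * (1/2 : ℝ) ^ (k + 1) = 2 := by
        have hh : ((2 : ℝ) * (1/2)) ^ (k+1) = 1 := by norm_num
        calc ((2:ℝ) ^ (k + 2 : ℕ)) * (1/2 : ℝ) ^ (k + 1)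
            = ((2:ℝ) * (1/2)) ^ (k+1) * 2 := by rw [mul_pow, pow_succ]; ring
          _ = 2 := by rw [hh]; ring
      have hmul : ((2 : ℝ) ^ ((k : ℝ) + 2) * ℓ) * (1/2 : ℝ) ^ (k + 1) ≤
          L * (1/2 : ℝ) ^ (k + 1) := by
        apply mul_le_mul_of_nonneg_right hL (by positivity)
      calc ℓ ≤ 2 * ℓ := by linarith
        _ = ((2 : ℝ) ^ ((k : ℝ) + 2) * ℓ) * (1/2 : ℝ) ^ (k + 1) := by
            rw [h2exp, mul_right_comm, hpow]
        _ ≤ L * (1/2 : ℝ) ^ (k + 1) := hmul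
    calc (1 : ℝ) / ε = (2 : ℝ) ^ ℓ :=
        (Real.rpow_logb (by norm_num) (by norm_num) (by positivity)).symm
      _ ≤ (2 : ℝ) ^ (L * (1/2 : ℝ) ^ (k + 1)) :=
        Real.rpow_le_rpow_of_exponent_le one_le_two hgoal
      _ = ((2 : ℝ) ^ L) ^ ((1/2 : ℝ) ^ (k + 1)) := Real.rpow_mul (by norm_num) _ _
      _ = (n : ℝ) ^ ((1/2 : ℝ) ^ (k + 1)) := by
        rw [Real.rpow_logb (by norm_num) (by norm_num) (by linarith)]

theorem greedy {n k : ℕ} {ε : ℝ} (hε : 0 < ε) (σ : Fin k → Equiv.Perm (Fin n))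
    (hk : (k : ℝ) ≤ Real.logb 2 (Real.logb 2 n) - Real.logb 2 (Real.logb 2 (1 / ε)) - 2) :
    ∀ (m : ℕ) (R : Finset (Fin n)), R.card ≤ m →
    ∃ (C : Finset (Fin n)) (P : Finset (Finset (Fin n))),
      (C.card : ℝ) ≤ Real.sqrt n ∧
      (∀ B ∈ P, (1 : ℝ) / ε ≤ B.card) ∧
      (P : Set (Finset (Fin n))).PairwiseDisjoint id ∧
      (∀ B ∈ P, Disjoint C B) ∧
      C ∪ P.biUnion id = R ∧
      (∀ B ∈ P, ∀ j : Fin k, StrictMonoOn (σ j) ↑B ∨ StrictAntiOn (σ j) ↑B) := by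
  intro m
  induction m with
  | zero =>
    intro R hR
    have hRe : R = ∅ := Finset.card_eq_zero.mp (Nat.le_zero.mp hR)
    subst hRe
    exact ⟨∅, ∅, by simp [Real.sqrt_nonneg], by simp, by simp, by simp, by simp, by simp⟩
  | succ m ih =>
    intro R hR
    by_cases hsmall : (R.card : ℝ) ≤ Real.sqrt n
    · exact ⟨R, ∅, hsmall, by simp, by simp, by simp, by simp, by simp⟩
    · push_neg at hsmall
      have hRn : R.card ≤ n := by
        have := Finset.card_le_univ R
        simpa using this
      have hn2 : 2 ≤ n := by
        by_contra h
        push_neg at h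
        interval_cases n
        · have h0 : R.card = 0 := by omega
          rw [h0] at hsmall
          norm_num at hsmall
        · have h1 : (R.card : ℝ) ≤ 1 := by exact_mod_cast hRn
          rw [Nat.cast_one, Real.sqrt_one] at hsmall
          linarith
      obtain ⟨T, hTR, hTcard, hTmono⟩ := iterated k σ R
      have hTbig : (1 : ℝ) / ε ≤ T.card := by
        have h1 : (n : ℝ) ^ ((1/2 : ℝ) ^ (k+1)) ≤ (R.card : ℝ) ^ ((1/2 : ℝ) ^ k) := by
          calc (n : ℝ) ^ ((1/2 : ℝ) ^ (k+1))
              = (Real.sqrt n) ^ ((1/2 : ℝ) ^ k) := by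
                rw [Real.sqrt_eq_rpow, pow_succ', Real.rpow_mul (Nat.cast_nonneg _)]
            _ ≤ (R.card : ℝ) ^ ((1/2 : ℝ) ^ k) :=
                Real.rpow_le_rpow (Real.sqrt_nonneg _) hsmall.le (by positivity)
        exact (key_ineq hε hn2 hk).trans (h1.trans hTcard)
      have hTpos : 0 < T.card := by
        have hpos : (0 : ℝ) < 1 / ε := by positivity
        have : (0 : ℝ) < (T.card : ℝ) := lt_of_lt_of_le hpos hTbig
        exact_mod_cast this
      have hcard' : (R \ T).card ≤ m := by
        rw [Finset.card_sdiff_of_subset hTR]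
        omega
      obtain ⟨C, P, hC, hP1, hP2, hP3, hP4, hP5⟩ := ih (R \ T) hcard'
      have hCsub : C ⊆ R \ T := by
        rw [← hP4]; exact Finset.subset_union_left
      have hBsub : ∀ B ∈ P, B ⊆ R \ T := by
        intro B hB x hx
        rw [← hP4]
        exact Finset.mem_union_right _ (Finset.mem_biUnion.mpr ⟨B, hB, hx⟩)
      refine ⟨C, insert T P, hC, ?_, ?_, ?_, ?_, ?_⟩
      · intro B hB
        rcases Finset.mem_insert.mp hB with rfl | hB
        · exact hTbig
        · exact hP1 B hB
      · rw [Finset.coe_insert]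
        refine Set.PairwiseDisjoint.insert hP2 ?_
        intro B hB hne
        exact (Finset.disjoint_sdiff.mono_right (hBsub B hB) :
          Disjoint T B)
      · intro B hB
        rcases Finset.mem_insert.mp hB with rfl | hB
        · exact Finset.sdiff_disjoint.mono_left hCsub
        · exact hP3 B hB
      · rw [Finset.biUnion_insert]
        rw [show C ∪ (id T ∪ P.biUnion id) = T ∪ (C ∪ P.biUnion id) from by
          simp only [id]
          rw [Finset.union_left_comm]]
        rw [hP4]
        exact Finset.union_sdiff_of_subset hTR
      · intro B hB j
        rcases Finset.mem_insert.mp hB with rfl | hB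
        · exact hTmono j
        · exact hP5 B hB j

end MonoPartAux


/-- Partition of `[n]` into a small set `C` and blocks `B_i` of size at least `1/ε`,
each monotone under every one of `k ≤ log log n - log log (1/ε) - 2` permutations. -/
theorem monotone_partition (n k : ℕ) (ε : ℝ) (hε : 0 < ε)
    (σ : Fin k → Equiv.Perm (Fin n))
    (hk : (k : ℝ) ≤ Real.logb 2 (Real.logb 2 n) - Real.logb 2 (Real.logb 2 (1 / ε)) - 2) :
    ∃ (C : Finset (Fin n)) (P : Finset (Finset (Fin n))),
      (C.card : ℝ) ≤ Real.sqrt n ∧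
      (∀ B ∈ P, (1 : ℝ) / ε ≤ B.card) ∧
      (P : Set (Finset (Fin n))).PairwiseDisjoint id ∧
      (∀ B ∈ P, Disjoint C B) ∧
      C ∪ P.biUnion id = Finset.univ ∧
      (∀ B ∈ P, ∀ j : Fin k, StrictMonoOn (σ j) ↑B ∨ StrictAntiOn (σ j) ↑B) := by
  exact MonoPartAux.greedy hε σ hk (Finset.univ.card) Finset.univ le_rfl
end

section
/- Suppose real numbers x_1, ..., x_q ∈ [0,1] satisfy x_1 ≥ 1 − 1/(q+1) and for all i ≥ 2, 1 − x_i ≤ (1/q)·∑_{j=1}^{i} x_j, where q ≥ 1 is an integer. Then ∑_{j=1}^{q} x_j ≥ q·(1 − (q/(q+1))^q). -/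
/-- If `x_1, …, x_q ∈ [0,1]` satisfy `x_1 ≥ 1 - 1/(q+1)` and
`1 - x_i ≤ (1/q) ∑_{j=1}^{i} x_j` for `2 ≤ i ≤ q`, then
`∑_{j=1}^{q} x_j ≥ q (1 - (q/(q+1))^q)`. -/
theorem category_probabilities_sum (q : ℕ) (hq : 1 ≤ q) (x : ℕ → ℝ)
    (hx01 : ∀ i ∈ Finset.Icc 1 q, x i ∈ Set.Icc (0 : ℝ) 1)
    (hx1 : 1 - 1 / ((q : ℝ) + 1) ≤ x 1)
    (hrec : ∀ i : ℕ, 2 ≤ i → i ≤ q →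
      1 - x i ≤ (1 / (q : ℝ)) * ∑ j ∈ Finset.Icc 1 i, x j) :
    (q : ℝ) * (1 - ((q : ℝ) / (q + 1)) ^ q) ≤ ∑ j ∈ Finset.Icc 1 q, x j := by
  have hq1 : (1 : ℝ) ≤ (q : ℝ) := by exact_mod_cast hq
  have hq0 : (0 : ℝ) < (q : ℝ) := by linarith
  have hq1' : (0 : ℝ) < (q : ℝ) + 1 := by linarith
  set r : ℝ := (q : ℝ) / (q + 1) with hr
  have hr0 : 0 ≤ r := div_nonneg hq0.le hq1'.le
  have hrq : r * ((q : ℝ) + 1) = q := by rw [hr]; field_simp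
  have key : ∀ i : ℕ, 1 ≤ i → i ≤ q →
      (q : ℝ) * (1 - r ^ i) ≤ ∑ j ∈ Finset.Icc 1 i, x j := by
    intro i hi1 hiq
    induction i with
    | zero => omega
    | succ n ih =>
      rcases Nat.eq_or_lt_of_le hi1 with h1 | h1
      · -- n + 1 = 1
        have hn : n = 0 := by omega
        subst hn
        simp only [Finset.Icc_self, Finset.sum_singleton]
        have h5 : r ^ (0 + 1) = r := by ring
        have : (q : ℝ) * (1 - r) = 1 - 1 / ((q : ℝ) + 1) := by
          rw [hr]; field_simp; ring
        rw [h5]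
        linarith
      · have hn1 : 1 ≤ n := by omega
        have hnq : n ≤ q := by omega
        have IH := ih hn1 hnq
        have hsum : ∑ j ∈ Finset.Icc 1 (n + 1), x j
            = (∑ j ∈ Finset.Icc 1 n, x j) + x (n + 1) := by
          rw [← Finset.Ico_add_one_right_eq_Icc, Finset.sum_Ico_succ_top (by omega),
            Finset.Ico_add_one_right_eq_Icc]
        have hrec' := hrec (n + 1) (by omega) hiq
        rw [hsum] at hrec' ⊢
        set S := ∑ j ∈ Finset.Icc 1 n, x j
        -- multiply hrec' by q
        have h2 : (q : ℝ) - q * x (n + 1) ≤ S + x (n + 1) := by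
          have := mul_le_mul_of_nonneg_left hrec' hq0.le
          rw [mul_comm ((q:ℝ)) ((1 / (q : ℝ)) * (S + x (n+1)))] at this
          field_simp at this
          nlinarith [this]
        have h3 : 0 ≤ r * (S - (q : ℝ) * (1 - r ^ n)) :=
          mul_nonneg hr0 (by linarith)
        have hid : ((q : ℝ) + 1) * r ^ (n + 1) = (q : ℝ) * r ^ n := by
          rw [pow_succ]; linear_combination r ^ n * hrq
        have h4 : (q : ℝ) * S + q ≤ ((q : ℝ) + 1) * (S + x (n + 1)) := by
          nlinarith [h2]
        have h5 : ((q : ℝ) + 1) * ((q : ℝ) * (1 - r ^ (n + 1))) ≤ (q : ℝ) * S + q := by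
          nlinarith [mul_le_mul_of_nonneg_left IH hq0.le, hid]
        exact le_of_mul_le_mul_left (by linarith) hq1'
  exact key q hq le_rfl
end

section
/- Let A be an I × R matrix of reals in [0,1] such that every row averages at least E ∈ (0,1]. Then there exists a column j and a set H of at least (εE/(1 − E + εE))·I rows such that A_{i,j} ≥ (1 − ε)E for every i ∈ H, for any fixed ε ∈ (0,1). -/
/-- Counting step of the randomized-to-advice conversion: if every row of a `[0,1]`-valued
`I × R` matrix averages at least `E`, then some column is at least `(1-ε)E` on at least a
`εE/(1-E+εE)` fraction of the rows. -/
theorem good_column_exists (I R : ℕ) (hI : 0 < I) (hR : 0 < R)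
    (A : Fin I → Fin R → ℝ) (E ε : ℝ)
    (hE : 0 < E) (hE1 : E ≤ 1) (hε : 0 < ε) (hε1 : ε < 1)
    (hA01 : ∀ i j, A i j ∈ Set.Icc (0 : ℝ) 1)
    (hrow : ∀ i, E ≤ (1 / (R : ℝ)) * ∑ j, A i j) :
    ∃ j : Fin R, ∃ H : Finset (Fin I),
      (ε * E / (1 - E + ε * E)) * I ≤ H.card ∧
      ∀ i ∈ H, (1 - ε) * E ≤ A i j := by
  set d : ℝ := 1 - E + ε * E with hd
  have hdpos : 0 < d := by nlinarith
  set c : ℝ := ε * E / d with hc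
  have hcpos : 0 < c := div_pos (by positivity) hdpos
  have hRpos : (0 : ℝ) < R := by exact_mod_cast hR
  -- per-row: the number of good columns is at least c * R
  have hrowcard : ∀ i : Fin I,
      c * R ≤ ((Finset.univ.filter (fun j => (1 - ε) * E ≤ A i j)).card : ℝ) := by
    intro i
    set S := Finset.univ.filter (fun j => (1 - ε) * E ≤ A i j) with hS
    have hsum : (R : ℝ) * E ≤ ∑ j, A i j := by
      have h := mul_le_mul_of_nonneg_left (hrow i) hRpos.le
      have : (R : ℝ) * ((1 / R) * ∑ j, A i j) = ∑ j, A i j := by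
        field_simp
      linarith [h, this.symm.le, this.le]
    have hsplit : ∑ j, A i j = (∑ j ∈ S, A i j) + ∑ j ∈ Sᶜ, A i j := by
      rw [add_comm, Finset.sum_compl_add_sum]
    have h1 : ∑ j ∈ S, A i j ≤ (S.card : ℝ) := by
      calc ∑ j ∈ S, A i j ≤ ∑ _j ∈ S, (1 : ℝ) :=
            Finset.sum_le_sum fun j _ => (hA01 i j).2
        _ = S.card := by simp
    have h2 : ∑ j ∈ Sᶜ, A i j ≤ (Sᶜ.card : ℝ) * ((1 - ε) * E) := by
      calc ∑ j ∈ Sᶜ, A i j ≤ ∑ _j ∈ Sᶜ, (1 - ε) * E := by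
            refine Finset.sum_le_sum fun j hj => ?_
            have : ¬ ((1 - ε) * E ≤ A i j) := by
              simpa [hS] using (Finset.mem_compl.mp hj)
            linarith
        _ = (Sᶜ.card : ℝ) * ((1 - ε) * E) := by
            rw [Finset.sum_const, nsmul_eq_mul]
    have hcc : (Sᶜ.card : ℝ) = (R : ℝ) - S.card := by
      have hcompl := Finset.card_compl S
      rw [hcompl]
      have hle : S.card ≤ R := by simpa using Finset.card_le_univ S
      simp only [Fintype.card_fin]
      exact Nat.cast_sub hle
    have key : (R : ℝ) * E ≤ (S.card : ℝ) + ((R : ℝ) - S.card) * ((1 - ε) * E) := by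
      rw [← hcc]
      calc (R : ℝ) * E ≤ ∑ j, A i j := hsum
        _ = (∑ j ∈ S, A i j) + ∑ j ∈ Sᶜ, A i j := hsplit
        _ ≤ _ := add_le_add h1 h2
    -- so S.card * d ≥ R * ε * E
    rw [hc, div_mul_eq_mul_div, div_le_iff₀ hdpos]
    rw [hd]
    nlinarith [key]
  -- double counting
  classical
  set f : Fin R → ℕ := fun j => (Finset.univ.filter (fun i => (1 - ε) * E ≤ A i j)).card
  have htotal : c * R * I ≤ ∑ j, (f j : ℝ) := by
    have hswap : ∑ j, (f j : ℝ) = ∑ i, ((Finset.univ.filter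
        (fun j => (1 - ε) * E ≤ A i j)).card : ℝ) := by
      simp only [f, Finset.card_filter]
      push_cast
      rw [Finset.sum_comm]
    rw [hswap]
    calc c * R * I = ∑ _i : Fin I, c * R := by
          rw [Finset.sum_const, nsmul_eq_mul, Finset.card_univ, Fintype.card_fin]
          ring
      _ ≤ _ := Finset.sum_le_sum fun i _ => hrowcard i
  by_contra hcon
  push_neg at hcon
  have hlt : ∀ j : Fin R, (f j : ℝ) < c * I := by
    intro j
    by_contra h
    push_neg at h
    obtain ⟨i, hi, hlt'⟩ := hcon j (Finset.univ.filter (fun i => (1 - ε) * E ≤ A i j)) h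
    exact absurd (Finset.mem_filter.mp hi).2 (not_le.mpr hlt')
  have : ∑ j, (f j : ℝ) < ∑ _j : Fin R, c * I :=
    Finset.sum_lt_sum_of_nonempty (Finset.univ_nonempty_iff.mpr ⟨⟨0, hR⟩⟩)
      fun j _ => hlt j
  rw [Finset.sum_const, nsmul_eq_mul, Finset.card_univ, Fintype.card_fin] at this
  nlinarith [htotal, this]
end
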